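/- Let B ⊆ ℤ \ {0} and let T_B = {r i : i ∉ B} ∪ {sr i : i ∈ B} be the corresponding normalized right transversal of H = {r 0, sr 0} in D_∞ = DihedralGroup 0. For x, y ∈ T_B with coset indices i and j respectively (x ∈ {r i, sr i}, y ∈ {r j, sr j}), the unique element of T_B lying in the right coset H·(x·y) has index i ∘' j, where i ∘' j = i + j if j ∉ B and i ∘' j = j − i if j ∈ B. Consequently, the index map T_B → ℤ (r i ↦ i, sr i ↦ i) is an isomorphism from the right loop (T_B, ∘) with the transversal-induced operation onto the right loop ℤ^B. -/

import Mathlib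

/-- The coset index of an element of the infinite dihedral group `DihedralGroup 0`:
both `r i` and `sr i` have index `i`. -/
def cosetIdx : DihedralGroup 0 → ℤ
  | .r i => i
  | .sr i => i

/-- The subgroup `H = {r 0, sr 0}` of `DihedralGroup 0`, as a set. -/
def Hset : Set (DihedralGroup 0) := {DihedralGroup.r 0, DihedralGroup.sr 0}

/-- The normalized right transversal of `Hset` determined by `B ⊆ ℤ \ {0}`:
`T_B = {r i : i ∉ B} ∪ {sr i : i ∈ B}`. -/
def TB (B : Set ℤ) : Set (DihedralGroup 0) :=
  {x | match x with
    | .r i => i ∉ B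
    | .sr i => i ∈ B}

/-- For B ⊆ ℤ \ {0} and the normalized right transversal T_B of
H = {r 0, sr 0} in D_∞, if x, y ∈ T_B have coset indices i, j then the unique element
of T_B in the right coset H·(x·y) has index i ∘' j, where i ∘' j = i + j if j ∉ B and
i ∘' j = j - i if j ∈ B.  Consequently the index map is an isomorphism of right loops
from (T_B, ∘) onto ℤ^B: it is a bijection T_B → ℤ carrying the transversal-induced
operation to ∘'. -/
theorem dihedral_transversal_iso_ZB (B : Set ℤ) (hB : B ⊆ {i | i ≠ 0})
    (op' : ℤ → ℤ → ℤ)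
    (hop' : ∀ i j : ℤ, (j ∉ B → op' i j = i + j) ∧ (j ∈ B → op' i j = j - i)) :
    (∀ x ∈ TB B, ∀ y ∈ TB B, ∀ z ∈ TB B,
      (∃ h ∈ Hset, z = h * (x * y)) → cosetIdx z = op' (cosetIdx x) (cosetIdx y)) ∧
    Function.Bijective (fun t : TB B => cosetIdx t.1) := by
  constructor
  · rintro x hx y hy z hz ⟨h, hh, rfl⟩
    obtain i | i := x <;> obtain j | j := y <;>
      rcases hh with rfl | rfl <;>
      simp only [DihedralGroup.r_mul_r, DihedralGroup.r_mul_sr,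
        DihedralGroup.sr_mul_r, DihedralGroup.sr_mul_sr, cosetIdx]
    · rw [(hop' i j).1 hy]; simp only [zero_add, sub_zero] <;> rfl
    · rw [(hop' i j).1 hy]; simp only [zero_add, sub_zero] <;> rfl
    · rw [(hop' i j).2 hy]; simp only [zero_add, sub_zero] <;> rfl
    · rw [(hop' i j).2 hy]; simp only [zero_add, sub_zero] <;> rfl
    · rw [(hop' i j).1 hy]; simp only [zero_add, sub_zero] <;> rfl
    · rw [(hop' i j).1 hy]; simp only [zero_add, sub_zero] <;> rfl
    · rw [(hop' i j).2 hy]; simp only [zero_add, sub_zero] <;> rfl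
    · rw [(hop' i j).2 hy]; simp only [zero_add, sub_zero] <;> rfl
  · constructor
    · rintro ⟨a, ha⟩ ⟨b, hb⟩ hab
      simp only at hab
      apply Subtype.ext
      obtain i | i := a <;> obtain j | j := b <;>
        simp only [cosetIdx] at hab <;> subst hab
      · rfl
      · exact absurd hb ha
      · exact absurd ha hb
      · rfl
    · intro i
      by_cases hi : i ∈ B
      · exact ⟨⟨DihedralGroup.sr i, hi⟩, rfl⟩
      · exact ⟨⟨DihedralGroup.r i, hi⟩, rfl⟩
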